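/- The matrices sigma and sigmabar are mutually inverse: sigma * sigmabar = sigmabar * sigma = I16, the 16x16 identity matrix over R. -/

import Mathlib

open Matrix Kronecker

/-- The elementary 16×16 matrix with entry `v` in row `(a,b)` and column `(c,d)`,
rows and columns indexed by `Fin 4 × Fin 4` (Kronecker product convention;
the index `i ∈ {1,…,4}` of the paper corresponds to `i - 1 ∈ Fin 4`). -/
def lgE {R : Type*} [CommRing R] (a b c d : Fin 4) (v : R) :
    Matrix (Fin 4 × Fin 4) (Fin 4 × Fin 4) R :=
  Matrix.single (a, b) (c, d) v

/-- The Links–Gould braiding `σ`, where `qi, pi` denote the inverses of `q, p`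
and `Y ^ 2 = p⁻² - q² + p²q² - 1`. -/
def LGsigma {R : Type*} [CommRing R] (q p qi pi Y : R) :
    Matrix (Fin 4 × Fin 4) (Fin 4 × Fin 4) R :=
  lgE 0 0 0 0 (pi ^ 2)
    + lgE 0 1 1 0 pi + lgE 1 0 0 1 pi + lgE 0 2 2 0 pi + lgE 2 0 0 2 pi
    + lgE 0 3 3 0 1 + lgE 3 0 0 3 1
    + lgE 1 0 1 0 (pi ^ 2 - 1) + lgE 2 0 2 0 (pi ^ 2 - 1)
    + lgE 1 1 1 1 (-1) + lgE 2 2 2 2 (-1)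
    + lgE 1 2 1 2 (q ^ 2 - 1)
    + lgE 1 2 2 1 (-q) + lgE 2 1 1 2 (-q)
    + lgE 1 2 3 0 (-(q * Y)) + lgE 3 0 1 2 (-(q * Y))
    + lgE 2 1 3 0 Y + lgE 3 0 2 1 Y
    + lgE 3 0 3 0 (Y ^ 2)
    + lgE 1 3 3 1 (p * q) + lgE 3 1 1 3 (p * q)
    + lgE 2 3 3 2 (p * q) + lgE 3 2 2 3 (p * q)
    + lgE 3 1 3 1 (p ^ 2 * q ^ 2 - 1) + lgE 3 2 3 2 (p ^ 2 * q ^ 2 - 1)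
    + lgE 3 3 3 3 (p ^ 2 * q ^ 2)

/-- The matrix `σ̄` (the inverse braiding). -/
def LGsigmabar {R : Type*} [CommRing R] (q p qi pi Y : R) :
    Matrix (Fin 4 × Fin 4) (Fin 4 × Fin 4) R :=
  lgE 0 0 0 0 (p ^ 2)
    + lgE 0 1 0 1 (p ^ 2 - 1) + lgE 0 2 0 2 (p ^ 2 - 1)
    + lgE 0 1 1 0 p + lgE 1 0 0 1 p + lgE 0 2 2 0 p + lgE 2 0 0 2 p
    + lgE 0 3 0 3 (Y ^ 2 * qi ^ 2)
    + lgE 0 3 1 2 (Y * qi) + lgE 1 2 0 3 (Y * qi)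
    + lgE 0 3 2 1 (-(Y * qi ^ 2)) + lgE 2 1 0 3 (-(Y * qi ^ 2))
    + lgE 0 3 3 0 1 + lgE 3 0 0 3 1
    + lgE 1 1 1 1 (-1) + lgE 2 2 2 2 (-1)
    + lgE 1 2 2 1 (-qi) + lgE 2 1 1 2 (-qi)
    + lgE 2 1 2 1 (qi ^ 2 - 1)
    + lgE 1 3 1 3 (pi ^ 2 * qi ^ 2 - 1) + lgE 2 3 2 3 (pi ^ 2 * qi ^ 2 - 1)
    + lgE 1 3 3 1 (pi * qi) + lgE 3 1 1 3 (pi * qi)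
    + lgE 2 3 3 2 (pi * qi) + lgE 3 2 2 3 (pi * qi)
    + lgE 3 3 3 3 (pi ^ 2 * qi ^ 2)

/-- The diagonal matrix `D = diag(p², -p²q², -p², p²q²)`, as a function on `Fin 4`. -/
def LGD {R : Type*} [CommRing R] (q p : R) : Fin 4 → R :=
  ![p ^ 2, -(p ^ 2 * q ^ 2), -(p ^ 2), p ^ 2 * q ^ 2]

/-- Quantum closure of the second strand of a two-strand tensor. -/
def lgcl2 {R : Type*} [CommRing R] (D : Fin 4 → R)
    (M : Matrix (Fin 4 × Fin 4) (Fin 4 × Fin 4) R) : Matrix (Fin 4) (Fin 4) R :=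
  Matrix.of fun y x => ∑ a : Fin 4, M (y, a) (x, a) * D a

/-- Quantum closure of the second and third strands of a three-strand tensor. -/
def lgcl3 {R : Type*} [CommRing R] (D : Fin 4 → R)
    (M : Matrix (Fin 4 × Fin 4 × Fin 4) (Fin 4 × Fin 4 × Fin 4) R) :
    Matrix (Fin 4) (Fin 4) R :=
  Matrix.of fun y x => ∑ a : Fin 4, ∑ b : Fin 4, M (y, a, b) (x, a, b) * D a * D b

/-- Quantum closure of the second, third and fourth strands of a four-strand tensor. -/
def lgcl4 {R : Type*} [CommRing R] (D : Fin 4 → R)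
    (M : Matrix (Fin 4 × Fin 4 × Fin 4 × Fin 4) (Fin 4 × Fin 4 × Fin 4 × Fin 4) R) :
    Matrix (Fin 4) (Fin 4) R :=
  Matrix.of fun y x =>
    ∑ a : Fin 4, ∑ b : Fin 4, ∑ c : Fin 4, M (y, a, b, c) (x, a, b, c) * D a * D b * D c

/-- `S ⊗ I₄` acting on the first two of three strands (Kronecker product,
reindexed along the canonical associativity equivalence). -/
def lgB1 {R : Type*} [CommRing R] (S : Matrix (Fin 4 × Fin 4) (Fin 4 × Fin 4) R) :
    Matrix (Fin 4 × Fin 4 × Fin 4) (Fin 4 × Fin 4 × Fin 4) R :=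
  Matrix.reindex (Equiv.prodAssoc (Fin 4) (Fin 4) (Fin 4))
    (Equiv.prodAssoc (Fin 4) (Fin 4) (Fin 4)) (S ⊗ₖ (1 : Matrix (Fin 4) (Fin 4) R))

/-- `I₄ ⊗ S` acting on the last two of three strands. -/
def lgB2 {R : Type*} [CommRing R] (S : Matrix (Fin 4 × Fin 4) (Fin 4 × Fin 4) R) :
    Matrix (Fin 4 × Fin 4 × Fin 4) (Fin 4 × Fin 4 × Fin 4) R :=
  (1 : Matrix (Fin 4) (Fin 4) R) ⊗ₖ S

/-- `S ⊗ I₁₆` acting on the first two of four strands. -/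
def lgC1 {R : Type*} [CommRing R] (S : Matrix (Fin 4 × Fin 4) (Fin 4 × Fin 4) R) :
    Matrix (Fin 4 × Fin 4 × Fin 4 × Fin 4) (Fin 4 × Fin 4 × Fin 4 × Fin 4) R :=
  Matrix.reindex (Equiv.prodAssoc (Fin 4) (Fin 4) (Fin 4 × Fin 4))
    (Equiv.prodAssoc (Fin 4) (Fin 4) (Fin 4 × Fin 4))
    (S ⊗ₖ (1 : Matrix (Fin 4 × Fin 4) (Fin 4 × Fin 4) R))

/-- `I₄ ⊗ S ⊗ I₄` acting on the middle two of four strands. -/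
def lgC2 {R : Type*} [CommRing R] (S : Matrix (Fin 4 × Fin 4) (Fin 4 × Fin 4) R) :
    Matrix (Fin 4 × Fin 4 × Fin 4 × Fin 4) (Fin 4 × Fin 4 × Fin 4 × Fin 4) R :=
  (1 : Matrix (Fin 4) (Fin 4) R) ⊗ₖ lgB1 S

/-- `I₁₆ ⊗ S` acting on the last two of four strands. -/
def lgC3 {R : Type*} [CommRing R] (S : Matrix (Fin 4 × Fin 4) (Fin 4 × Fin 4) R) :
    Matrix (Fin 4 × Fin 4 × Fin 4 × Fin 4) (Fin 4 × Fin 4 × Fin 4 × Fin 4) R :=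
  (1 : Matrix (Fin 4) (Fin 4) R) ⊗ₖ lgB2 S

section LGhelpers
variable {R : Type*} [CommRing R]

lemma lgE_eq_smul (a b c d : Fin 4) (v : R) :
    lgE a b c d v = v • Matrix.single ((a, b)) ((c, d)) (1 : R) := by
  simp [lgE]

lemma lgE_mul (a b c d e f g h : Fin 4) (u v : R) :
    lgE a b c d u * lgE e f g h v =
      if c = e ∧ d = f then lgE a b g h (u * v) else 0 := by
  unfold lgE
  split_ifs with hcd
  · obtain ⟨rfl, rfl⟩ := hcd
    exact Matrix.single_mul_single_same _ _ _ _ _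
  · exact Matrix.single_mul_single_of_ne _ _ _ _
      (by simpa [ne_eq, Prod.mk.injEq] using hcd) _

lemma lg_one_eq : (1 : Matrix (Fin 4 × Fin 4) (Fin 4 × Fin 4) R) =
    ∑ ij : Fin 4 × Fin 4, Matrix.single ij ij (1 : R) := by
  nth_rewrite 1 [Matrix.matrix_eq_sum_single
    (1 : Matrix (Fin 4 × Fin 4) (Fin 4 × Fin 4) R)]
  refine Finset.sum_congr rfl fun i _ => ?_
  rw [Finset.sum_eq_single i]
  · simp
  · intro j _ hj
    simp [Matrix.one_apply, hj.symm]
  · simp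

end LGhelpers

set_option maxHeartbeats 2000000 in
/-- `σ` and `σ̄` are mutually inverse 16×16 matrices. -/
theorem LG_sigma_sigmabar_inverse (R : Type*) [CommRing R] (q p qi pi Y : R)
    (hq : q * qi = 1) (hp : p * pi = 1)
    (hY : Y ^ 2 = pi ^ 2 - q ^ 2 + p ^ 2 * q ^ 2 - 1) :
    LGsigma q p qi pi Y * LGsigmabar q p qi pi Y = 1 ∧
      LGsigmabar q p qi pi Y * LGsigma q p qi pi Y = 1 := by
  constructor
  · rw [LGsigma, LGsigmabar, lg_one_eq, Fintype.sum_prod_type]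
    simp only [Fin.sum_univ_four, mul_add, add_mul, lgE_mul]
    simp only [Fin.reduceEq, and_true, true_and, and_false, false_and, and_self,
      ite_true, ite_false, reduceIte, add_zero, zero_add]
    simp only [lgE_eq_smul]
    match_scalars
    all_goals (first
      | ring1
      | linear_combination hq
      | linear_combination hp
      | linear_combination -Y * hq
      | linear_combination Y * hq
      | linear_combination (-qi - q) * hq
      | linear_combination (qi * Y + q * Y) * hq
      | linear_combination (1 + p * pi) * hp
      | linear_combination (pi + p) * hp
      | linear_combination p * pi * hq + hp
      | linear_combination (1 - pi ^ 2 + q ^ 2 - q ^ 2 * p ^ 2) * hq + (1 - q * qi) * hY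
      | linear_combination (p * qi * pi ^ 2 + q * p ^ 2 * pi) * hq + (qi * pi + q * p) * hp
      | linear_combination (p ^ 2 * pi ^ 2 + q * p ^ 2 * qi * pi ^ 2) * hq + (1 + p * pi) * hp)
  · rw [LGsigma, LGsigmabar, lg_one_eq, Fintype.sum_prod_type]
    simp only [Fin.sum_univ_four, mul_add, add_mul, lgE_mul]
    simp only [Fin.reduceEq, and_true, true_and, and_false, false_and, and_self,
      ite_true, ite_false, reduceIte, add_zero, zero_add]
    simp only [lgE_eq_smul]
    match_scalars
    all_goals (first
      | ring1
      | linear_combination hq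
      | linear_combination hp
      | linear_combination -Y * hq
      | linear_combination Y * hq
      | linear_combination (-qi - q) * hq
      | linear_combination (qi * Y + q * Y) * hq
      | linear_combination (1 + p * pi) * hp
      | linear_combination (pi + p) * hp
      | linear_combination p * pi * hq + hp
      | linear_combination (1 - pi ^ 2 + q ^ 2 - q ^ 2 * p ^ 2) * hq + (1 - q * qi) * hY
      | linear_combination (p * qi * pi ^ 2 + q * p ^ 2 * pi) * hq + (qi * pi + q * p) * hp
      | linear_combination (p ^ 2 * pi ^ 2 + q * p ^ 2 * qi * pi ^ 2) * hq + (1 + p * pi) * hp)
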